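/- Let E be a Banach space over 𝕜, let 𝒜 be a standard subalgebra of B(E), and let B ∈ 𝒜. Then there exists A ∈ 𝒜 with A ≠ 0 and A ∘ B = 0 if and only if the closure of the range of B is not all of E. -/

import Mathlib

set_option synthInstance.maxHeartbeats 400000
set_option maxHeartbeats 1000000

/-- A subalgebra of `B(E)` is *standard* if it contains every continuous finite-rank
operator (it contains the identity automatically, being a subalgebra). -/
def IsStandardSubalgebra (𝕜 : Type*) [RCLike 𝕜] {E : Type*} [NormedAddCommGroup E]
    [NormedSpace 𝕜 E] (𝒜 : Subalgebra 𝕜 (E →L[𝕜] E)) : Prop :=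
  ∀ A : E →L[𝕜] E, FiniteDimensional 𝕜 (LinearMap.range (A : E →ₗ[𝕜] E)) → A ∈ 𝒜

theorem exists_left_annihilator_iff_range_not_dense
    {𝕜 : Type*} [RCLike 𝕜]
    {E : Type*} [NormedAddCommGroup E] [NormedSpace 𝕜 E] [CompleteSpace E]
    (𝒜 : Subalgebra 𝕜 (E →L[𝕜] E)) (h𝒜 : IsStandardSubalgebra 𝕜 𝒜) (B : 𝒜) :
    (∃ A : 𝒜, A ≠ 0 ∧ A * B = 0) ↔
      (LinearMap.range ((B : E →L[𝕜] E) : E →ₗ[𝕜] E)).topologicalClosure ≠ ⊤ := by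
  set Bop := (B : E →L[𝕜] E) with hBop
  constructor
  · rintro ⟨A, hA0, hAB⟩ htop
    apply hA0
    have hABop : (A : E →L[𝕜] E).comp Bop = 0 := by
      have := congrArg (Subtype.val) hAB
      exact this
    -- range Bop ≤ ker A
    have hle : LinearMap.range (Bop : E →ₗ[𝕜] E) ≤ LinearMap.ker ((A : E →L[𝕜] E) : E →ₗ[𝕜] E) := by
      rintro _ ⟨z, rfl⟩
      have := congrFun (congrArg DFunLike.coe hABop) z
      simpa using this
    have hclosed : IsClosed ((LinearMap.ker ((A : E →L[𝕜] E) : E →ₗ[𝕜] E) : Submodule 𝕜 E) : Set E) :=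
      ContinuousLinearMap.isClosed_ker (A : E →L[𝕜] E)
    have hle' : (LinearMap.range (Bop : E →ₗ[𝕜] E)).topologicalClosure ≤
        LinearMap.ker ((A : E →L[𝕜] E) : E →ₗ[𝕜] E) :=
      Submodule.topologicalClosure_minimal _ hle hclosed
    rw [htop] at hle'
    have : (A : E →L[𝕜] E) = 0 := by
      ext x
      simpa using (LinearMap.mem_ker.mp (hle' (Submodule.mem_top : x ∈ ⊤)))
    exact Subtype.ext this
  · intro htop
    set S := (LinearMap.range (Bop : E →ₗ[𝕜] E)).topologicalClosure with hS
    haveI hSc : IsClosed (S : Set E) := Submodule.isClosed_topologicalClosure _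
    obtain ⟨x, hx⟩ : ∃ x, x ∉ S := by
      by_contra h
      push_neg at h
      exact htop (Submodule.eq_top_iff'.mpr h)
    have hx0 : x ≠ 0 := fun h => hx (h ▸ S.zero_mem)
    -- quotient map as a continuous linear map
    let π : E →L[𝕜] E ⧸ S :=
      LinearMap.mkContinuous S.mkQ 1 fun m => by
        simpa using Submodule.Quotient.norm_mk_le S m
    have hπx : π x ≠ 0 := by
      simp only [π, LinearMap.mkContinuous_apply, Submodule.mkQ_apply]
      rw [Ne, Submodule.Quotient.mk_eq_zero]
      exact hx
    obtain ⟨g, -, hg⟩ := exists_dual_vector 𝕜 (π x) (norm_ne_zero_iff.mpr hπx)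
    have hgx : g (π x) ≠ 0 := by
      rw [hg]
      simpa using hπx
    set f : E →L[𝕜] 𝕜 := g.comp π with hf
    set A : E →L[𝕜] E := f.smulRight x with hA
    have hAmem : A ∈ 𝒜 := by
      apply h𝒜
      have hle : LinearMap.range (A : E →ₗ[𝕜] E) ≤ Submodule.span 𝕜 {x} := by
        rintro _ ⟨z, rfl⟩
        exact Submodule.smul_mem _ _ (Submodule.mem_span_singleton_self x)
      exact Submodule.finiteDimensional_of_le hle
    refine ⟨⟨A, hAmem⟩, ?_, ?_⟩
    · intro h
      have : A x = 0 := by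
        have := congrArg Subtype.val h
        simp only [ZeroMemClass.coe_zero] at this
        rw [this]; rfl
      rw [hA] at this
      simp only [ContinuousLinearMap.smulRight_apply] at this
      exact hgx (by have h2 : f x = 0 := by simpa [smul_eq_zero, hx0] using this
                    exact h2)
    · apply Subtype.ext
      show A.comp Bop = 0
      ext z
      have hz : Bop z ∈ S := Submodule.le_topologicalClosure _ ⟨z, rfl⟩
      have hπz : π (Bop z) = 0 := by
        simp only [π, LinearMap.mkContinuous_apply, Submodule.mkQ_apply]
        exact (Submodule.Quotient.mk_eq_zero S).mpr hz
      simp [hA, hf, hπz]
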